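/- Let φ = xyz ∈ F[x,y,z] and f⃗ = (x, y, −2z). Then f⃗ · ∇φ = 0, but there is no g⃗ ∈ A³ such that f⃗ = g⃗ × ∇φ. Hence the Koszul complex associated to φ = xyz fails to be exact at the second step. -/
import Mathlib


open MvPolynomial

noncomputable section

variable {F : Type*} [Field F] [CharZero F]

/-- The polynomial algebra A = F[x,y,z]. -/
abbrev P3 (F : Type*) [Field F] : Type _ := MvPolynomial (Fin 3) F

/-- Gradient of a polynomial. -/
def grad (f : P3 F) : Fin 3 → P3 F := fun i => pderiv i f

/-- Divergence of a triple of polynomials. -/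
def divg (v : Fin 3 → P3 F) : P3 F :=
  pderiv 0 (v 0) + pderiv 1 (v 1) + pderiv 2 (v 2)

/-- Curl of a triple of polynomials. -/
def curl (v : Fin 3 → P3 F) : Fin 3 → P3 F :=
  ![pderiv 1 (v 2) - pderiv 2 (v 1),
    pderiv 2 (v 0) - pderiv 0 (v 2),
    pderiv 0 (v 1) - pderiv 1 (v 0)]

/-- Cross product of two triples of polynomials. -/
def cross (v w : Fin 3 → P3 F) : Fin 3 → P3 F :=
  ![v 1 * w 2 - v 2 * w 1, v 2 * w 0 - v 0 * w 2, v 0 * w 1 - v 1 * w 0]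

/-- Inner (dot) product of two triples of polynomials. -/
def dot (v w : Fin 3 → P3 F) : P3 F := v 0 * w 0 + v 1 * w 1 + v 2 * w 2

/-- The weighted Euler vector field (ϖ₁x, ϖ₂y, ϖ₃z). -/
def eul (w : Fin 3 → ℕ) : Fin 3 → P3 F := fun i => (w i : P3 F) * X i

/-- The Jacobian ideal ⟨∂φ/∂x, ∂φ/∂y, ∂φ/∂z⟩. -/
def jacId (φ : P3 F) : Ideal (P3 F) :=
  Ideal.span {pderiv 0 φ, pderiv 1 φ, pderiv 2 φ}

/-- For φ = xyz and f⃗ = (x, y, −2z), one has f⃗ · ∇φ = 0 but f⃗ is not of the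
form g⃗ × ∇φ: the Koszul complex of xyz fails to be exact at the second step. -/
theorem statement11 (F : Type*) [Field F] [CharZero F] :
    dot ![(X 0 : P3 F), X 1, -(2 : P3 F) * X 2] (grad (X 0 * X 1 * X 2)) = 0 ∧
    ¬ ∃ g : Fin 3 → P3 F,
        ![(X 0 : P3 F), X 1, -(2 : P3 F) * X 2] = cross g (grad (X 0 * X 1 * X 2)) := by

  have hgrad : grad (X 0 * X 1 * X 2 : P3 F) =
      ![X 1 * X 2, X 0 * X 2, X 0 * X 1] := by
    funext i
    fin_cases i <;>
      simp [grad, pderiv_mul, pderiv_X] <;> ring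
  constructor
  · rw [hgrad]
    simp [dot]
    ring
  · rintro ⟨g, hg⟩
    have h0 := congrFun hg 0
    rw [hgrad] at h0
    simp [cross] at h0
    -- h0 : X 0 = g 1 * (X 0 * X 1) - g 2 * (X 0 * X 2)
    have := congrArg (eval (fun i : Fin 3 => if i = 0 then (1:F) else 0)) h0
    simp [eval_X] at this
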